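/- Let U, V : (0,1] → ℝ be differentiable functions satisfying U'(t) + (λ0/t) U(t) = V(t) for all t in (0,1], with λ > λ0. Then for all t in (0,1]: (t^λ U(t))^2 + (λ - λ0) ∫_t^1 s^{2λ-1} U(s)^2 ds ≤ U(1)^2 + (1/(λ-λ0)) ∫_t^1 s^{2λ+1} V(s)^2 ds. -/

import Mathlib

open MeasureTheory intervalIntegral Set in
/-- Evolution lemma: if `U' + (λ0/t) U = V` on `(0,1]` and `λ > λ0`, then
`(t^λ U(t))² + (λ-λ0) ∫_t^1 s^{2λ-1} U(s)² ds
  ≤ U(1)² + (1/(λ-λ0)) ∫_t^1 s^{2λ+1} V(s)² ds`, the integrals being assumed to exist. -/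
theorem stmt_3 (U V : ℝ → ℝ) (lam lam0 : ℝ) (hlam : lam0 < lam)
    (hode : ∀ t ∈ Set.Ioc (0:ℝ) 1, HasDerivAt U (V t - lam0 / t * U t) t)
    (hU2 : ∀ t ∈ Set.Ioc (0:ℝ) 1,
      IntervalIntegrable (fun s : ℝ => s ^ (2 * lam - 1) * (U s) ^ 2) volume t 1)
    (hV2 : ∀ t ∈ Set.Ioc (0:ℝ) 1,
      IntervalIntegrable (fun s : ℝ => s ^ (2 * lam + 1) * (V s) ^ 2) volume t 1) :
    ∀ t ∈ Set.Ioc (0:ℝ) 1,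
      (t ^ lam * U t) ^ 2
          + (lam - lam0) * ∫ s in t..1, s ^ (2 * lam - 1) * (U s) ^ 2
        ≤ (U 1) ^ 2 + (1 / (lam - lam0)) * ∫ s in t..1, s ^ (2 * lam + 1) * (V s) ^ 2 := by
  intro t ht
  obtain ⟨ht0, ht1⟩ := ht
  set c : ℝ := lam - lam0 with hc
  have hcpos : 0 < c := sub_pos.2 hlam
  set F : ℝ → ℝ := fun s => (s ^ lam * U s) ^ 2 with hF
  set φ : ℝ → ℝ := fun s =>
    c * (s ^ (2 * lam - 1) * (U s) ^ 2) - (1 / c) * (s ^ (2 * lam + 1) * (V s) ^ 2) with hφ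
  -- F is continuous on [t,1]
  have hIcc : Set.Icc t 1 ⊆ Set.Ioc (0:ℝ) 1 := fun x hx => ⟨lt_of_lt_of_le ht0 hx.1, hx.2⟩
  have hUcont : ∀ x ∈ Set.Icc t 1, ContinuousAt U x := fun x hx =>
    (hode x (hIcc hx)).continuousAt
  have hFcont : ContinuousOn F (Set.Icc t 1) := by
    intro x hx
    have hx0 : (0:ℝ) < x := lt_of_lt_of_le ht0 hx.1
    exact (((Real.continuousAt_rpow_const x lam (Or.inl hx0.ne')).mul
      (hUcont x hx)).pow 2).continuousWithinAt
  -- derivative of F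
  have hFderiv : ∀ x ∈ Set.Ioo t 1,
      HasDerivAt F (2 * c * (x ^ (2 * lam - 1) * (U x) ^ 2)
        + 2 * (x ^ (2 * lam) * (U x * V x))) x := by
    intro x hx
    have hx0 : (0:ℝ) < x := ht0.trans hx.1
    have hxm : x ∈ Set.Ioc (0:ℝ) 1 := ⟨hx0, hx.2.le⟩
    have h1 : HasDerivAt (fun s : ℝ => s ^ lam) (lam * x ^ (lam - 1)) x :=
      Real.hasDerivAt_rpow_const (Or.inl hx0.ne')
    have h2 : HasDerivAt (fun s : ℝ => s ^ lam * U s)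
        (lam * x ^ (lam - 1) * U x + x ^ lam * (V x - lam0 / x * U x)) x :=
      h1.mul (hode x hxm)
    have h3 := h2.pow 2
    convert h3 using 1
    · rfl
    · rfl
    · rfl
    have e1 : x ^ (2 * lam - 1) = x ^ lam * x ^ (lam - 1) := by
      rw [← Real.rpow_add hx0]; ring_nf
    have e2 : x ^ (2 * lam) = x ^ lam * x ^ lam := by
      rw [← Real.rpow_add hx0]; ring_nf
    have e4 : x ^ (lam - 1) = x ^ lam / x := by
      rw [Real.rpow_sub hx0, Real.rpow_one]
    rw [e1, e2, e4]
    field_simp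
    ring
  -- φ ≤ F' pointwise
  have hφle : ∀ x ∈ Set.Ioo t 1, φ x ≤ 2 * c * (x ^ (2 * lam - 1) * (U x) ^ 2)
      + 2 * (x ^ (2 * lam) * (U x * V x)) := by
    intro x hx
    have hx0 : (0:ℝ) < x := ht0.trans hx.1
    set a : ℝ := x ^ ((2 * lam - 1) / 2) with ha
    set b : ℝ := x ^ ((2 * lam + 1) / 2) with hb
    have ha2 : a ^ 2 = x ^ (2 * lam - 1) := by
      rw [ha, ← Real.rpow_natCast (x ^ ((2*lam-1)/2)) 2, ← Real.rpow_mul hx0.le]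
      norm_num
    have hb2 : b ^ 2 = x ^ (2 * lam + 1) := by
      rw [hb, ← Real.rpow_natCast (x ^ ((2*lam+1)/2)) 2, ← Real.rpow_mul hx0.le]
      norm_num
    have hab : a * b = x ^ (2 * lam) := by
      rw [ha, hb, ← Real.rpow_add hx0]; ring_nf
    rw [hφ]
    simp only [← ha2, ← hb2, ← hab]
    have key : 0 ≤ (c * (a * U x) + b * V x) ^ 2 / c := div_nonneg (sq_nonneg _) hcpos.le
    have expand : (c * (a * U x) + b * V x) ^ 2 / c
        = c * (a ^ 2 * (U x) ^ 2) + 2 * (a * b * (U x * V x)) + (1 / c) * (b ^ 2 * (V x) ^ 2) := by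
      field_simp
      ring
    nlinarith [key, expand]
  -- integrability of φ on Icc t 1
  have htm : t ∈ Set.Ioc (0:ℝ) 1 := ⟨ht0, ht1⟩
  have hUi := hU2 t htm
  have hVi := hV2 t htm
  have hφint : IntegrableOn φ (Set.Icc t 1) volume := by
    have h : IntervalIntegrable φ volume t 1 :=
      (hUi.const_mul c).sub (hVi.const_mul (1 / c))
    rw [intervalIntegrable_iff_integrableOn_Ioc_of_le ht1] at h
    rwa [integrableOn_Icc_iff_integrableOn_Ioc]
  -- apply FTC inequality
  have main := integral_le_sub_of_hasDeriv_right_of_le ht1 hFcont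
    (fun x hx => (hFderiv x hx).hasDerivWithinAt) hφint hφle
  have hsplit : (∫ y in t..1, φ y)
      = c * (∫ s in t..1, s ^ (2 * lam - 1) * (U s) ^ 2)
        - (1 / c) * (∫ s in t..1, s ^ (2 * lam + 1) * (V s) ^ 2) := by
    rw [hφ]
    rw [intervalIntegral.integral_sub (hUi.const_mul c) (hVi.const_mul (1 / c)),
      intervalIntegral.integral_const_mul, intervalIntegral.integral_const_mul]
  have hF1 : F 1 = (U 1) ^ 2 := by simp [hF]
  rw [hsplit, hF1] at main
  have : F t = (t ^ lam * U t) ^ 2 := rfl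
  linarith [main]
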